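/- Fix $\alpha \in (0,1)$ and for each $\lambda \in (0,1)$ let $f_{\lambda,\alpha}(x) = \max(x-\lambda, 0)^\alpha$ on $[0,1]$. Then the family $\{f_{\lambda,\alpha} : \lambda \in (0,1)\}$ is linearly independent, and every nonzero finite linear combination $\sum_{i=1}^n a_i f_{\lambda_i,\alpha}$ (with distinct $\lambda_i$ and all $a_i \ne 0$) fails to be $\beta$-Hölder for every $\beta > \alpha$. -/

import Mathlib

open Finset in
/-- Key lemma: a nontrivial combination of `max (x - μ j) 0 ^ α` has increments
exactly `a * t ^ α` near the smallest breakpoint with nonzero coefficient. -/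
lemma stmt12_key {ι : Type*} (α : ℝ) (hα0 : 0 < α) (s : Finset ι) (c : ι → ℝ)
    (μ : ι → ℝ) (hμ : ∀ i ∈ s, μ i ∈ Set.Ioo (0:ℝ) 1)
    (hinj : ∀ j ∈ s, ∀ k ∈ s, μ j = μ k → j = k)
    (hT : ∃ i ∈ s, c i ≠ 0) :
    ∃ a : ℝ, a ≠ 0 ∧ ∃ δ : ℝ, 0 < δ ∧ ∀ t : ℝ, 0 < t → t ≤ δ →
      ∃ x y : ℝ, x ∈ Set.Icc (0:ℝ) 1 ∧ y ∈ Set.Icc (0:ℝ) 1 ∧ x - y = t ∧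
        (∑ j ∈ s, c j * max (x - μ j) 0 ^ α) - (∑ j ∈ s, c j * max (y - μ j) 0 ^ α)
          = a * t ^ α := by
  classical
  set T : Finset ι := s.filter (fun j => c j ≠ 0) with hTdef
  have hTs : ∀ j ∈ T, j ∈ s := fun j hj => (Finset.mem_filter.1 hj).1
  have hTne : T.Nonempty := by
    obtain ⟨i, hi, hci⟩ := hT
    exact ⟨i, Finset.mem_filter.2 ⟨hi, hci⟩⟩
  obtain ⟨i₀, hi₀T, hinf⟩ := T.exists_mem_eq_inf' hTne μ
  have hi₀s : i₀ ∈ s := hTs _ hi₀T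
  have hci₀ : c i₀ ≠ 0 := (Finset.mem_filter.1 hi₀T).2
  set lam0 : ℝ := μ i₀ with hlam0
  have hlam0mem : lam0 ∈ Set.Ioo (0:ℝ) 1 := hμ _ hi₀s
  have hmin : ∀ j ∈ T, lam0 ≤ μ j := by
    intro j hj
    exact hinf ▸ Finset.inf'_le μ hj
  set m : ℝ := T.inf' hTne (fun j => if μ j ≤ lam0 then 1 else μ j) with hmdef
  have hm1 : lam0 < m := by
    rw [hmdef, Finset.lt_inf'_iff]
    intro j hj
    by_cases h : μ j ≤ lam0
    · simp [h, hlam0mem.2]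
    · simp [h]; exact lt_of_not_ge h
  have hm2 : ∀ j ∈ T, ¬ (μ j ≤ lam0) → m ≤ μ j := by
    intro j hj h
    have := Finset.inf'_le (fun j => if μ j ≤ lam0 then 1 else μ j) hj
    rw [if_neg h] at this
    exact this
  have hmle1 : m ≤ 1 := by
    have := Finset.inf'_le (fun j => if μ j ≤ lam0 then 1 else μ j) hi₀T
    rw [if_pos le_rfl] at this
    exact this
  refine ⟨c i₀, hci₀, (m - lam0)/2, by linarith, ?_⟩
  intro t ht htδ
  refine ⟨lam0 + t, lam0, ⟨by linarith [hlam0mem.1], by linarith⟩,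
    ⟨le_of_lt hlam0mem.1, le_of_lt hlam0mem.2⟩, by ring, ?_⟩
  have hsumy : (∑ j ∈ s, c j * max (lam0 - μ j) 0 ^ α) = 0 := by
    apply Finset.sum_eq_zero
    intro j hj
    by_cases hc : c j = 0
    · simp [hc]
    · have hjT : j ∈ T := Finset.mem_filter.2 ⟨hj, hc⟩
      have : lam0 - μ j ≤ 0 := by linarith [hmin j hjT]
      rw [max_eq_right this, Real.zero_rpow (ne_of_gt hα0), mul_zero]
  have hsumx : (∑ j ∈ s, c j * max (lam0 + t - μ j) 0 ^ α) = c i₀ * t ^ α := by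
    rw [Finset.sum_eq_single i₀]
    · have : lam0 + t - μ i₀ = t := by rw [← hlam0]; ring
      rw [this, max_eq_left (le_of_lt ht)]
    · intro j hj hji₀
      by_cases hc : c j = 0
      · simp [hc]
      · have hjT : j ∈ T := Finset.mem_filter.2 ⟨hj, hc⟩
        have hne : μ j ≠ lam0 := fun h => hji₀ (hinj j hj i₀ hi₀s h)
        have hgt : ¬ (μ j ≤ lam0) := fun h => hne (le_antisymm h (hmin j hjT))
        have hmj : m ≤ μ j := hm2 j hjT hgt
        have : lam0 + t - μ j ≤ 0 := by linarith
        rw [max_eq_right this, Real.zero_rpow (ne_of_gt hα0), mul_zero]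
    · intro h; exact absurd hi₀s h
  rw [hsumx, hsumy, sub_zero]

/-- For fixed `α ∈ (0,1)`, the family `f_λ(x) = max(x-λ,0)^α` (`λ ∈ (0,1)`),
viewed as functions on `[0,1]`, is linearly independent, and every nontrivial
finite linear combination fails to be `β`-Hölder for every `β > α`. -/
theorem stmt12 (α : ℝ) (hα : α ∈ Set.Ioo (0:ℝ) 1)
    (F : Set.Ioo (0:ℝ) 1 → (Set.Icc (0:ℝ) 1 → ℝ))
    (hF : ∀ lam x, F lam x = max ((x : ℝ) - (lam : ℝ)) 0 ^ α) :
    LinearIndependent ℝ F ∧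
    ∀ (n : ℕ), 0 < n → ∀ (a : Fin n → ℝ) (lam : Fin n → Set.Ioo (0:ℝ) 1),
      Function.Injective lam → (∀ i, a i ≠ 0) →
      ∀ β : ℝ, α < β →
        ¬ ∃ C : ℝ, ∀ x y : Set.Icc (0:ℝ) 1,
          |(∑ i, a i • F (lam i)) x - (∑ i, a i • F (lam i)) y| ≤
            C * |(x : ℝ) - (y : ℝ)| ^ β := by
  constructor
  · rw [linearIndependent_iff']
    intro s g hsum i hi
    by_contra hgi
    obtain ⟨a, ha, δ, hδ, hpt⟩ := stmt12_key α hα.1 s g (fun j => (j : ℝ))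
      (fun j _ => j.2) (fun j _ k _ h => Subtype.ext h) ⟨i, hi, hgi⟩
    obtain ⟨x, y, hx, hy, hxy, heq⟩ := hpt δ hδ le_rfl
    have h1 : (∑ j ∈ s, g j • F j) ⟨x, hx⟩ = ∑ j ∈ s, g j * max (x - (j : ℝ)) 0 ^ α := by
      simp [Finset.sum_apply, hF]
    have h2 : (∑ j ∈ s, g j • F j) ⟨y, hy⟩ = ∑ j ∈ s, g j * max (y - (j : ℝ)) 0 ^ α := by
      simp [Finset.sum_apply, hF]
    rw [hsum] at h1 h2
    simp only [Pi.zero_apply] at h1 h2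
    rw [← h1, ← h2, sub_zero] at heq
    exact mul_ne_zero ha (ne_of_gt (Real.rpow_pos_of_pos hδ α)) heq.symm
  · intro n hn a lam hlaminj ha β hβ ⟨C, hC⟩
    obtain ⟨a₀, ha₀, δ, hδ, hpt⟩ := stmt12_key α hα.1 Finset.univ a
      (fun i => (lam i : ℝ)) (fun i _ => (lam i).2)
      (fun j _ k _ h => hlaminj (Subtype.ext h)) ⟨⟨0, hn⟩, Finset.mem_univ _, ha _⟩
    set ε : ℝ := if h : 0 < C then (|a₀| / (2 * C)) ^ (β - α)⁻¹ else 1 with hεdef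
    have hε : 0 < ε := by
      rw [hεdef]; split
      · exact Real.rpow_pos_of_pos (div_pos (abs_pos.2 ha₀) (by linarith)) _
      · exact one_pos
    set t : ℝ := min δ ε with htdef
    have ht : 0 < t := lt_min hδ hε
    obtain ⟨x, y, hx, hy, hxy, heq⟩ := hpt t ht (min_le_left _ _)
    have hCle := hC ⟨x, hx⟩ ⟨y, hy⟩
    have h1 : (∑ i, a i • F (lam i)) (⟨x, hx⟩ : Set.Icc (0:ℝ) 1)
        = ∑ i, a i * max (x - (lam i : ℝ)) 0 ^ α := by
      simp [Finset.sum_apply, hF]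
    have h2 : (∑ i, a i • F (lam i)) (⟨y, hy⟩ : Set.Icc (0:ℝ) 1)
        = ∑ i, a i * max (y - (lam i : ℝ)) 0 ^ α := by
      simp [Finset.sum_apply, hF]
    simp only [Subtype.coe_mk] at hCle
    rw [h1, h2, heq, hxy, abs_of_pos ht] at hCle
    have htα : 0 < t ^ α := Real.rpow_pos_of_pos ht α
    have habs : |a₀ * t ^ α| = |a₀| * t ^ α := by
      rw [abs_mul, abs_of_pos htα]
    rw [habs] at hCle
    have hsplit : t ^ β = t ^ (β - α) * t ^ α := by
      rw [← Real.rpow_add ht]; ring_nf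
    rw [hsplit, ← mul_assoc] at hCle
    have hkey : |a₀| ≤ C * t ^ (β - α) := le_of_mul_le_mul_right hCle htα
    by_cases hCpos : 0 < C
    · have hεeq : ε = (|a₀| / (2 * C)) ^ (β - α)⁻¹ := by rw [hεdef, dif_pos hCpos]
      have htε : t ≤ ε := min_le_right _ _
      have h3 : t ^ (β - α) ≤ ε ^ (β - α) :=
        Real.rpow_le_rpow (le_of_lt ht) htε (by linarith)
      have h4 : ε ^ (β - α) = |a₀| / (2 * C) := by
        rw [hεeq, ← Real.rpow_mul (by positivity),
          inv_mul_cancel₀ (by linarith : β - α ≠ 0), Real.rpow_one]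
      have h5 : C * t ^ (β - α) ≤ |a₀| / 2 := by
        calc C * t ^ (β - α) ≤ C * (|a₀| / (2 * C)) := by
              exact mul_le_mul_of_nonneg_left (h4 ▸ h3) (le_of_lt hCpos)
          _ = |a₀| / 2 := by field_simp
      have : |a₀| ≤ |a₀| / 2 := le_trans hkey h5
      have := abs_pos.2 ha₀
      linarith
    · push_neg at hCpos
      have : C * t ^ (β - α) ≤ 0 :=
        mul_nonpos_of_nonpos_of_nonneg hCpos (Real.rpow_nonneg (le_of_lt ht) _)
      have := abs_pos.2 ha₀
      linarith
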